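/- Factorial moments of the Poisson log-normal distribution: let x ~ N(μ, Θ⁻¹) be a p-dimensional Gaussian vector and, conditionally on x, let y = (y_1,…,y_p) have independent Poisson coordinates with y_j ~ Poisson(exp(x_j)). For y,n ∈ ℕ define the falling factorial φ(y,n) = ∏_{i=1}^n (y−i+1) for n>0 and φ(y,0)=1. Then for any N = (n_1,…,n_p)ᵀ ∈ ℕᵖ, E[ ∏_{j=1}^p φ(y_j, n_j) ] = exp( Nᵀμ + NᵀΘ⁻¹N/2 ). -/

import Mathlib

open MeasureTheory Filter

noncomputable section

/-- falling factorial `φ(y,n) = y(y-1)⋯(y-n+1)` as a real number. -/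
def fallFact (y n : ℕ) : ℝ := ∏ i ∈ Finset.range n, ((y : ℝ) - (i : ℝ))

/-- density of the Gaussian distribution `N(μ, Θ⁻¹)`. -/
def gaussDensity {p : ℕ} (Θ : Matrix (Fin p) (Fin p) ℝ) (μ : Fin p → ℝ) (x : Fin p → ℝ) : ℝ :=
  (2 * Real.pi) ^ (-(p : ℝ) / 2) * Real.sqrt Θ.det *
    Real.exp (-(dotProduct (x - μ) (Θ.mulVec (x - μ))) / 2)

/-- Poisson log-normal density on `ℕᵖ`. -/
def plnDensity {p : ℕ} (Θ : Matrix (Fin p) (Fin p) ℝ) (μ : Fin p → ℝ) (y : Fin p → ℕ) : ℝ :=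
  ∫ x : Fin p → ℝ, gaussDensity Θ μ x *
    ∏ j, Real.exp (x j * (y j : ℝ) - Real.exp (x j)) / (Nat.factorial (y j) : ℝ)

/-- `Θ` is symmetric with all eigenvalues in `[m, M]`. -/
def eigBounds {p : ℕ} (m M : ℝ) (Θ : Matrix (Fin p) (Fin p) ℝ) : Prop :=
  Θ.IsSymm ∧ ∀ v : Fin p → ℝ,
    m * (∑ i, v i ^ 2) ≤ dotProduct v (Θ.mulVec v) ∧
      dotProduct v (Θ.mulVec v) ≤ M * (∑ i, v i ^ 2)

/-- Index set of the half-vectorization `vech` of a symmetric `p × p` matrix. -/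
abbrev VechIdx (p : ℕ) := {ij : Fin p × Fin p // ij.1 ≤ ij.2}

/-- symmetric matrix built from a half-vectorization. -/
def toMat {p : ℕ} (v : VechIdx p → ℝ) : Matrix (Fin p) (Fin p) ℝ :=
  fun i j => if h : i ≤ j then v ⟨(i, j), h⟩ else v ⟨(j, i), le_of_not_ge h⟩

/-- mixture Poisson log-normal density with proportions `pw`, means `μs` and
precision matrices encoded by `ν`. -/
def mixDensity {p G : ℕ} (pw : Fin G → ℝ) (μs : Fin G → Fin p → ℝ)
    (ν : Fin G × VechIdx p → ℝ) (y : Fin p → ℕ) : ℝ :=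
  ∑ g, pw g * plnDensity (toMat fun ij => ν (g, ij)) (μs g) y

/-- the parameter space `D`. -/
def paramSet (p G : ℕ) (m M : ℝ) : Set (Fin G × VechIdx p → ℝ) :=
  {ν | ∀ g, eigBounds m M (toMat fun ij => ν (g, ij))}

/-- Condition (C3): bounded and pairwise distinct mean vectors. -/
def condC3 {p G : ℕ} (M : ℝ) (μs : Fin G → Fin p → ℝ) : Prop :=
  (∀ g, ‖μs g‖ ≤ M) ∧ Function.Injective μs

/-- the mixture Poisson log-normal distribution, as a measure on `ℕᵖ`. -/
def mixMeasure {p G : ℕ} (pw : Fin G → ℝ) (μs : Fin G → Fin p → ℝ)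
    (ν : Fin G × VechIdx p → ℝ) : Measure (Fin p → ℕ) :=
  Measure.sum fun y => (ENNReal.ofReal (mixDensity pw μs ν y)) • Measure.dirac y

/-- euclidean (`ℓ₂`) norm of a vector. -/
def l2norm {ι : Type*} [Fintype ι] (v : ι → ℝ) : ℝ := Real.sqrt (∑ i, v i ^ 2)

/-- gradient (vector of partial derivatives) of `f` at `x`. -/
def gradAt {ι : Type*} [Fintype ι] [DecidableEq ι] (f : (ι → ℝ) → ℝ) (x : ι → ℝ) : ι → ℝ :=
  fun a => fderiv ℝ f x (Pi.single a 1)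

/-- `(a,b)` entry of the Hessian matrix of `f` at `x`. -/
def hessAt {ι : Type*} [Fintype ι] [DecidableEq ι] (f : (ι → ℝ) → ℝ) (x : ι → ℝ)
    (a b : ι) : ℝ :=
  fderiv ℝ (fun z => fderiv ℝ f z (Pi.single b 1)) x (Pi.single a 1)

/-- Fisher information matrix of the mixture Poisson log-normal model at `ν`. -/
def fisherInfo {p G : ℕ} (pw : Fin G → ℝ) (μs : Fin G → Fin p → ℝ)
    (ν : Fin G × VechIdx p → ℝ) :
    Matrix (Fin G × VechIdx p) (Fin G × VechIdx p) ℝ :=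
  fun a b => ∑' y : Fin p → ℕ, mixDensity pw μs ν y *
    (gradAt (fun ν' => Real.log (mixDensity pw μs ν' y)) ν a *
      gradAt (fun ν' => Real.log (mixDensity pw μs ν' y)) ν b)

/-- the lasso penalty `R(ν) = Σ_g Σ_{l≠m} |Θ_{g,lm}|`. -/
def penR {p G : ℕ} (ν : Fin G × VechIdx p → ℝ) : ℝ :=
  ∑ g : Fin G, ∑ l : Fin p, ∑ m' : Fin p,
    if l ≠ m' then |toMat (fun ij => ν (g, ij)) l m'| else 0

/-- the penalized negative log-likelihood objective `−n⁻¹ℓₙ(ν) + λ R(ν)`. -/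
def objective {p G : ℕ} (pw : Fin G → ℝ) (μs : Fin G → Fin p → ℝ) (lam : ℝ) (n : ℕ)
    (ys : ℕ → Fin p → ℕ) (ν : Fin G × VechIdx p → ℝ) : ℝ :=
  -(1 / n : ℝ) * ∑ i ∈ Finset.range n, Real.log (mixDensity pw μs ν (ys i)) + lam * penR ν

/-- maximum absolute row sum norm `‖A‖_{1,∞}`. -/
def maxRowSum {a b : Type*} [Fintype b] (A : Matrix a b ℝ) : ℝ := ⨆ i, ∑ j, |A i j|

/-- spectral norm of a real matrix. -/
def specNorm {ι : Type*} [Fintype ι] (A : Matrix ι ι ℝ) : ℝ :=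
  ⨆ v : ι → ℝ, l2norm (A.mulVec v) / l2norm v

/-- Poisson probability mass function with rate `r`. -/
def poissonPMF (r : ℝ) (k : ℕ) : ℝ := Real.exp (-r) * r ^ k / (Nat.factorial k : ℝ)

end

open MeasureTheory Filter Matrix

section auxlemmas

lemma fallFact_zero_of_lt {k n : ℕ} (h : k < n) : fallFact k n = 0 :=
  Finset.prod_eq_zero (Finset.mem_range.2 h) (by simp)

lemma fallFact_nonneg (k n : ℕ) : 0 ≤ fallFact k n := by
  rcases lt_or_ge k n with h | h
  · rw [fallFact_zero_of_lt h]
  · refine Finset.prod_nonneg fun i hi => ?_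
    have : (i : ℝ) < (n : ℝ) := by exact_mod_cast Finset.mem_range.1 hi
    have : (n : ℝ) ≤ (k : ℝ) := by exact_mod_cast h
    have h3 : (i : ℝ) < (n:ℝ) := by exact_mod_cast Finset.mem_range.1 hi
    linarith

lemma fallFact_add (m n : ℕ) :
    fallFact (m + n) n = (Nat.factorial (m + n) : ℝ) / (Nat.factorial m : ℝ) := by
  induction n generalizing m with
  | zero =>
    simp only [Nat.add_zero, fallFact, Finset.range_zero, Finset.prod_empty]
    rw [div_self (by exact_mod_cast (Nat.factorial_pos m).ne')]
  | succ n ih =>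
    have h0 : fallFact (m + (n + 1)) (n + 1)
        = fallFact ((m + 1) + n) n * ((m : ℝ) + 1) := by
      rw [fallFact, Finset.prod_range_succ]
      have h1 : (m + (n+1) : ℕ) = ((m+1) + n : ℕ) := by ring
      rw [h1, fallFact]
      congr 1
      push_cast
      ring
    rw [h0, ih (m + 1)]
    have h2 : ((m+1) + n : ℕ) = (m + (n+1) : ℕ) := by ring
    rw [h2, Nat.factorial_succ]
    have hm : (Nat.factorial m : ℝ) ≠ 0 := by exact_mod_cast (Nat.factorial_pos m).ne'
    field_simp
    push_cast
    ring

lemma poissonPMF_nonneg {r : ℝ} (hr : 0 ≤ r) (k : ℕ) : 0 ≤ poissonPMF r k := by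
  unfold poissonPMF
  positivity

lemma hasSum_poissonPMF (r : ℝ) : HasSum (fun m : ℕ => poissonPMF r m) 1 := by
  have h := (NormedSpace.expSeries_div_hasSum_exp r).mul_left (Real.exp (-r))
  rw [← Real.exp_eq_exp_ℝ] at h
  have : Real.exp (-r) * Real.exp r = 1 := by
    rw [← Real.exp_add]; simp
  rw [this] at h
  refine h.congr_fun fun m => ?_
  unfold poissonPMF
  ring

lemma hasSum_poisson_fallFact (r : ℝ) (n : ℕ) :
    HasSum (fun k => poissonPMF r k * fallFact k n) (r ^ n) := by
  have hinj : Function.Injective (fun m : ℕ => m + n) := add_left_injective n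
  have hvanish : ∀ k ∉ Set.range (fun m : ℕ => m + n),
      poissonPMF r k * fallFact k n = 0 := by
    intro k hk
    have hk' : k < n := by
      by_contra h
      exact hk ⟨k - n, Nat.sub_add_cancel (le_of_not_gt h)⟩
    rw [fallFact_zero_of_lt hk', mul_zero]
  rw [← hinj.hasSum_iff hvanish]
  have hmain : ∀ m : ℕ, poissonPMF r (m + n) * fallFact (m + n) n
      = r ^ n * poissonPMF r m := by
    intro m
    rw [fallFact_add]
    unfold poissonPMF
    have h1 : (Nat.factorial (m+n) : ℝ) ≠ 0 := by
      exact_mod_cast (Nat.factorial_pos (m+n)).ne'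
    have h2 : (Nat.factorial m : ℝ) ≠ 0 := by
      exact_mod_cast (Nat.factorial_pos m).ne'
    field_simp
    ring
  have := ((hasSum_poissonPMF r).mul_left (r ^ n))
  rw [mul_one] at this
  exact this.congr_fun fun m => (hmain m).symm ▸ rfl

lemma hasSum_pi_prod : ∀ (p : ℕ) (f : Fin p → ℕ → ℝ) (S : Fin p → ℝ),
    (∀ j, HasSum (f j) (S j)) → (∀ j k, 0 ≤ f j k) →
    HasSum (fun y : Fin p → ℕ => ∏ j, f j (y j)) (∏ j, S j) := by
  intro p
  induction p with
  | zero =>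
    intro f S _ _
    have : HasSum (fun y : Fin 0 → ℕ => ∏ j, f j (y j))
        (∑ y : Fin 0 → ℕ, ∏ j, f j (y j)) := hasSum_fintype _
    simpa using this
  | succ p ih =>
    intro f S h hnn
    set e : (ℕ × (Fin p → ℕ)) ≃ (Fin (p+1) → ℕ) :=
      Fin.consEquiv (fun _ : Fin (p+1) => ℕ) with he
    rw [← Equiv.hasSum_iff e]
    have hG : HasSum (fun y : Fin p → ℕ => ∏ j, f j.succ (y j)) (∏ j : Fin p, S j.succ) :=
      ih _ _ (fun j => h j.succ) (fun j k => hnn j.succ k)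
    have hsum : Summable fun z : ℕ × (Fin p → ℕ) =>
        f 0 z.1 * ∏ j, f j.succ (z.2 j) := by
      apply summable_mul_of_summable_norm (f := fun k => f 0 k)
        (g := fun y : Fin p → ℕ => ∏ j, f j.succ (y j))
      · refine ((h 0).summable).congr fun k => ?_
        rw [Real.norm_eq_abs, abs_of_nonneg (hnn 0 k)]
      · refine hG.summable.congr fun y => ?_
        rw [Real.norm_eq_abs, abs_of_nonneg (Finset.prod_nonneg fun j _ => hnn j.succ (y j))]
    have hmul := (h 0).mul hG hsum
    have : HasSum (fun z : ℕ × (Fin p → ℕ) =>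
        ∏ j : Fin (p+1), f j (e z j)) (S 0 * ∏ j : Fin p, S j.succ) := by
      refine hmul.congr_fun fun z => ?_
      rw [Fin.prod_univ_succ]
      simp [he, Fin.consEquiv]
    rw [Fin.prod_univ_succ]
    exact this

lemma integral_comp_mulVec {p : ℕ} (A : Matrix (Fin p) (Fin p) ℝ) (hA : IsUnit A.det)
    (f : (Fin p → ℝ) → ℝ) :
    ∫ x : Fin p → ℝ, f (A.mulVec x) = |A.det|⁻¹ * ∫ x, f x := by
  have hI : Invertible A := A.invertibleOfIsUnitDet hA
  let le : (Fin p → ℝ) ≃ₗ[ℝ] (Fin p → ℝ) := A.toLinearEquiv' hI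
  let me : (Fin p → ℝ) ≃ᵐ (Fin p → ℝ) :=
    le.toContinuousLinearEquiv.toHomeomorph.toMeasurableEquiv
  have hdet : LinearMap.det (Matrix.toLin' A) = A.det := LinearMap.det_toLin' A
  have hne : LinearMap.det (Matrix.toLin' A) ≠ 0 := by
    rw [hdet]; exact hA.ne_zero
  have hmap : Measure.map (⇑me) (volume : Measure (Fin p → ℝ))
      = ENNReal.ofReal |A.det|⁻¹ • volume := by
    have h1 : (⇑me : (Fin p → ℝ) → (Fin p → ℝ)) = ⇑(Matrix.toLin' A) := by
      funext x; rfl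
    rw [h1, Measure.map_linearMap_addHaar_pi_eq_smul_addHaar hne volume, hdet, abs_inv]
  have h2 : ∫ x : Fin p → ℝ, f (A.mulVec x) = ∫ x, f (me x) := by
    congr 1
  rw [h2, ← integral_map_equiv me f, hmap, integral_smul_measure,
    ENNReal.toReal_ofReal (inv_nonneg.2 (abs_nonneg _)), smul_eq_mul]

lemma dot_swap {p : ℕ} (M : Matrix (Fin p) (Fin p) ℝ) (a b : Fin p → ℝ) :
    dotProduct (M.mulVec a) b = dotProduct a (Mᵀ.mulVec b) := by
  rw [dotProduct_comm, Matrix.dotProduct_mulVec, ← Matrix.mulVec_transpose,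
    dotProduct_comm]

lemma gauss_mgf {p : ℕ} (Θ : Matrix (Fin p) (Fin p) ℝ) (hΘ : Θ.PosDef) (μ v : Fin p → ℝ) :
    ∫ x : Fin p → ℝ, gaussDensity Θ μ x * Real.exp (dotProduct v x)
      = Real.exp (dotProduct v μ + dotProduct v (Θ⁻¹.mulVec v) / 2) := by
  have hdet : 0 < Θ.det := hΘ.det_pos
  have hU : IsUnit Θ.det := hdet.ne'.isUnit
  have hΘT : Θᵀ = Θ := hΘ.isHermitian.eq
  have hinv : (Θ⁻¹).PosDef := hΘ.inv
  open scoped MatrixOrder in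
  set S := CFC.sqrt Θ⁻¹ with hSdef
  open scoped MatrixOrder in
  have hSS : S * S = Θ⁻¹ := CFC.sqrt_mul_sqrt_self Θ⁻¹ hinv.posSemidef.nonneg
  open scoped MatrixOrder in
  have hST : Sᵀ = S := (CFC.sqrt_nonneg Θ⁻¹).posSemidef.1.eq
  have hΘinvT : (Θ⁻¹)ᵀ = Θ⁻¹ := hinv.isHermitian.eq
  -- determinant facts
  have hSdet2 : S.det * S.det = (Θ.det)⁻¹ := by
    have h := congrArg Matrix.det hSS
    rwa [Matrix.det_mul, Matrix.det_nonsing_inv, Ring.inverse_eq_inv'] at h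
  have hSdetne : S.det ≠ 0 := by
    intro h
    rw [h, mul_zero] at hSdet2
    exact (inv_pos.2 hdet).ne' hSdet2.symm
  have hSU : IsUnit S.det := hSdetne.isUnit
  have habsS : |S.det| = (Real.sqrt Θ.det)⁻¹ := by
    rw [← Real.sqrt_mul_self_eq_abs, hSdet2, Real.sqrt_inv]
  -- S Θ S = 1
  have hSΘS : S * Θ * S = 1 := by
    have h1 : (S * Θ * S) * S = S := by
      rw [Matrix.mul_assoc (S * Θ) S S, hSS, Matrix.mul_assoc S Θ Θ⁻¹,
        Matrix.mul_nonsing_inv Θ hU, Matrix.mul_one]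
    calc S * Θ * S = ((S * Θ * S) * S) * S⁻¹ := by
          rw [Matrix.mul_nonsing_inv_cancel_right _ _ hSU]
      _ = S * S⁻¹ := by rw [h1]
      _ = 1 := Matrix.mul_nonsing_inv S hSU
  -- abbreviations
  set w : Fin p → ℝ := Θ⁻¹.mulVec v with hw
  have hΘw : Θ.mulVec w = v := by
    rw [hw, Matrix.mulVec_mulVec, Matrix.mul_nonsing_inv Θ hU, Matrix.one_mulVec]
  set f : (Fin p → ℝ) → ℝ :=
    fun x => gaussDensity Θ μ x * Real.exp (dotProduct v x) with hf
  set c : Fin p → ℝ := μ + w with hc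
  set K : ℝ := dotProduct v μ + dotProduct v w / 2 with hK
  -- pointwise identity after substitution
  have hpoint : ∀ z : Fin p → ℝ, f (S.mulVec z + c)
      = (2 * Real.pi) ^ (-(p : ℝ) / 2) * Real.sqrt Θ.det * Real.exp K *
        Real.exp (-dotProduct z z / 2) := by
    intro z
    have hsub : S.mulVec z + c - μ = S.mulVec z + w := by
      rw [hc]; abel
    have hzz : dotProduct (S.mulVec z) (Θ.mulVec (S.mulVec z))
        = dotProduct z z := by
      rw [dot_swap S z (Θ.mulVec (S.mulVec z)), hST, Matrix.mulVec_mulVec,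
        Matrix.mulVec_mulVec, hSΘS, Matrix.one_mulVec]
    have hcross1 : dotProduct w (Θ.mulVec (S.mulVec z))
        = dotProduct v (S.mulVec z) := by
      rw [hw, dot_swap Θ⁻¹ v _, hΘinvT, Matrix.mulVec_mulVec,
        Matrix.nonsing_inv_mul Θ hU, Matrix.one_mulVec]
    have hcross2 : dotProduct (S.mulVec z) (Θ.mulVec w)
        = dotProduct v (S.mulVec z) := by
      rw [hΘw, dotProduct_comm]
    have hw2 : dotProduct w (Θ.mulVec w) = dotProduct v w := by
      rw [hΘw, dotProduct_comm]
    have hexp : dotProduct v (S.mulVec z + c)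
        - dotProduct (S.mulVec z + c - μ) (Θ.mulVec (S.mulVec z + c - μ)) / 2
        = K - dotProduct z z / 2 := by
      rw [hsub, hc]
      simp only [Matrix.mulVec_add, dotProduct_add, add_dotProduct]
      rw [hzz, hcross1, hcross2, hw2, hK]
      ring
    have harg : -dotProduct (S.mulVec z + c - μ) (Θ.mulVec (S.mulVec z + c - μ)) / 2
        + dotProduct v (S.mulVec z + c) = K + -dotProduct z z / 2 := by
      linarith [hexp]
    calc f (S.mulVec z + c)
        = (2 * Real.pi) ^ (-(p : ℝ) / 2) * Real.sqrt Θ.det *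
            Real.exp (-dotProduct (S.mulVec z + c - μ)
              (Θ.mulVec (S.mulVec z + c - μ)) / 2
              + dotProduct v (S.mulVec z + c)) := by
          rw [hf]
          simp only [gaussDensity]
          rw [Real.exp_add]
          ring
      _ = (2 * Real.pi) ^ (-(p : ℝ) / 2) * Real.sqrt Θ.det * Real.exp K *
            Real.exp (-dotProduct z z / 2) := by
          rw [harg, Real.exp_add]
          ring
  -- now the integral computation
  have step1 : ∫ x, f x = ∫ x, f (x + c) :=
    (MeasureTheory.integral_add_right_eq_self f c).symm
  have step2 : ∫ z : Fin p → ℝ, f (S.mulVec z + c) = |S.det|⁻¹ * ∫ x, f (x + c) :=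
    integral_comp_mulVec S hSU (fun x => f (x + c))
  have step3 : ∫ x, f x = |S.det| * ∫ z : Fin p → ℝ, f (S.mulVec z + c) := by
    rw [step2, ← mul_assoc, mul_inv_cancel₀ (abs_ne_zero.2 hSdetne), one_mul, step1]
  -- evaluate the remaining Gaussian integral
  have step4 : ∫ z : Fin p → ℝ, Real.exp (-dotProduct z z / 2)
      = Real.sqrt (2 * Real.pi) ^ p := by
    have h1 : ∀ z : Fin p → ℝ, Real.exp (-dotProduct z z / 2)
        = ∏ j, Real.exp (-(2⁻¹ : ℝ) * (z j) ^ 2) := by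
      intro z
      rw [← Real.exp_sum]
      congr 1
      rw [dotProduct, neg_div, Finset.sum_div, ← Finset.sum_neg_distrib]
      exact Finset.sum_congr rfl fun j _ => by ring
    calc ∫ z : Fin p → ℝ, Real.exp (-dotProduct z z / 2)
        = ∫ z : Fin p → ℝ, ∏ j, Real.exp (-(2⁻¹ : ℝ) * (z j) ^ 2) := by
          simp_rw [h1]
      _ = (∫ t : ℝ, Real.exp (-(2⁻¹ : ℝ) * t ^ 2)) ^ p := by
          rw [MeasureTheory.integral_fintype_prod_volume_eq_pow (ι := Fin p)
            (fun t : ℝ => Real.exp (-(2⁻¹ : ℝ) * t ^ 2)), Fintype.card_fin]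
      _ = Real.sqrt (2 * Real.pi) ^ p := by
          rw [integral_gaussian (2⁻¹ : ℝ)]
          norm_num
          rw [mul_comm]
  have hconst : (2 * Real.pi) ^ (-(p : ℝ) / 2) * Real.sqrt (2 * Real.pi) ^ p = 1 := by
    have h2π : (0 : ℝ) < 2 * Real.pi := by positivity
    rw [Real.sqrt_eq_rpow, ← Real.rpow_natCast ((2 * Real.pi) ^ ((1 : ℝ)/2)) p,
      ← Real.rpow_mul h2π.le, ← Real.rpow_add h2π]
    rw [show -(p : ℝ) / 2 + 1 / 2 * (p : ℝ) = 0 by ring, Real.rpow_zero]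
  rw [step3]
  simp_rw [hpoint]
  rw [MeasureTheory.integral_const_mul, step4, habsS]
  have hs : (Real.sqrt Θ.det) ≠ 0 := (Real.sqrt_pos.2 hdet).ne'
  calc (Real.sqrt Θ.det)⁻¹ * ((2 * Real.pi) ^ (-(p : ℝ) / 2) * Real.sqrt Θ.det *
          Real.exp K * Real.sqrt (2 * Real.pi) ^ p)
      = Real.exp K * ((2 * Real.pi) ^ (-(p : ℝ) / 2) * Real.sqrt (2 * Real.pi) ^ p) *
          ((Real.sqrt Θ.det)⁻¹ * Real.sqrt Θ.det) := by ring
    _ = Real.exp K := by rw [hconst, inv_mul_cancel₀ hs, mul_one, mul_one]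

end auxlemmas

/-- Factorial moments of the Poisson log-normal distribution: for x ~ N(μ, Θ⁻¹) and,
given x, independent Poisson coordinates y_j ~ Poisson(exp(x_j)), one has
E[∏_j φ(y_j, N_j)] = exp(Nᵀμ + NᵀΘ⁻¹N/2). -/
theorem stmt4 {p : ℕ} (hp : 0 < p) (Θ : Matrix (Fin p) (Fin p) ℝ) (hΘ : Θ.PosDef)
    (μ : Fin p → ℝ) (N : Fin p → ℕ) :
    (∫ x : Fin p → ℝ, gaussDensity Θ μ x *
        ∑' y : Fin p → ℕ,
          (∏ j, poissonPMF (Real.exp (x j)) (y j)) * ∏ j, fallFact (y j) (N j)) =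
      Real.exp ((∑ j, (N j : ℝ) * μ j) +
        dotProduct (fun j => (N j : ℝ)) (Θ⁻¹.mulVec fun j => (N j : ℝ)) / 2) := by
  have htsum : ∀ x : Fin p → ℝ,
      (∑' y : Fin p → ℕ,
        (∏ j, poissonPMF (Real.exp (x j)) (y j)) * ∏ j, fallFact (y j) (N j))
      = Real.exp (dotProduct (fun j => (N j : ℝ)) x) := by
    intro x
    have hs : HasSum (fun y : Fin p → ℕ =>
        ∏ j, (poissonPMF (Real.exp (x j)) (y j) * fallFact (y j) (N j)))
        (∏ j, Real.exp (x j) ^ (N j)) :=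
      hasSum_pi_prod p (fun j k => poissonPMF (Real.exp (x j)) k * fallFact k (N j))
        (fun j => Real.exp (x j) ^ (N j))
        (fun j => hasSum_poisson_fallFact _ _)
        (fun j k => mul_nonneg (poissonPMF_nonneg (Real.exp_pos _).le k)
          (fallFact_nonneg k (N j)))
    have hs' : HasSum (fun y : Fin p → ℕ =>
        (∏ j, poissonPMF (Real.exp (x j)) (y j)) * ∏ j, fallFact (y j) (N j))
        (∏ j, Real.exp (x j) ^ (N j)) :=
      hs.congr_fun fun y => Finset.prod_mul_distrib.symm
    rw [hs'.tsum_eq]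
    have h2 : (∏ j, Real.exp (x j) ^ (N j)) = Real.exp (∑ j, (N j : ℝ) * x j) := by
      calc (∏ j, Real.exp (x j) ^ (N j))
          = ∏ j, Real.exp ((N j : ℝ) * x j) :=
            Finset.prod_congr rfl fun j _ => (Real.exp_nat_mul (x j) (N j)).symm
        _ = Real.exp (∑ j, (N j : ℝ) * x j) := (Real.exp_sum _ _).symm
    rw [h2]
    rfl
  calc (∫ x : Fin p → ℝ, gaussDensity Θ μ x *
        ∑' y : Fin p → ℕ,
          (∏ j, poissonPMF (Real.exp (x j)) (y j)) * ∏ j, fallFact (y j) (N j))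
      = ∫ x : Fin p → ℝ, gaussDensity Θ μ x *
          Real.exp (dotProduct (fun j => (N j : ℝ)) x) := by
        apply integral_congr_ae
        filter_upwards with x
        rw [htsum x]
    _ = Real.exp (dotProduct (fun j => (N j : ℝ)) μ +
          dotProduct (fun j => (N j : ℝ))
            (Θ⁻¹.mulVec fun j => (N j : ℝ)) / 2) := gauss_mgf Θ hΘ μ _
    _ = Real.exp ((∑ j, (N j : ℝ) * μ j) +
          dotProduct (fun j => (N j : ℝ))
            (Θ⁻¹.mulVec fun j => (N j : ℝ)) / 2) := rfl
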